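/- Let C_1, ..., C_n be {−1, +1}-valued random variables on a probability space (Ω, F, P) such that P(C_1 = +1) ≤ 3/4 and, for every i with 2 ≤ i ≤ n and every vector v ∈ {−1, +1}^{i−1} with P((C_1, ..., C_{i−1}) = v) > 0, P(C_i = +1 | (C_1, ..., C_{i−1}) = v) ≤ 3/4. Then for every k ∈ {0, 1, ..., n}, P(at least k of the variables C_1, ..., C_n equal +1) ≤ P(B_{n,3/4} ≥ k), where B_{n,3/4} denotes a Binomial random variable with n trials and success probability 3/4. -/

import Mathlib

open MeasureTheory ProbabilityTheory
open scoped ENNReal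

section Stmt11Helpers
open Finset

lemma stmt11_quarter : ((3:ℝ≥0∞)/4 + 1/4) = 1 := by
  rw [ENNReal.div_add_div_same]
  norm_num
  exact ENNReal.div_self (by norm_num) (by norm_num)

lemma stmt11_quarter' : ((1:ℝ≥0∞)/4 + 3/4) = 1 := by
  rw [add_comm]; exact stmt11_quarter

lemma stmt11_tail_zero (m : ℕ) :
    ∑ j ∈ Icc 0 m, (m.choose j : ℝ≥0∞) * (3/4)^j * (1/4)^(m-j) = 1 := by
  have h : Icc 0 m = range (m+1) := by
    rw [← Finset.Ico_add_one_right_eq_Icc, Nat.Ico_zero_eq_range]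
  rw [h]
  have := add_pow (3/4 : ℝ≥0∞) (1/4) m
  rw [stmt11_quarter, one_pow] at this
  have goal_eq : ∑ j ∈ range (m+1), (m.choose j : ℝ≥0∞) * (3/4)^j * (1/4)^(m-j)
      = ∑ j ∈ range (m+1), (3/4:ℝ≥0∞)^j * (1/4)^(m-j) * (m.choose j) :=
    Finset.sum_congr rfl fun j _ => by ring
  rw [goal_eq]
  exact this.symm

lemma stmt11_tail_rec (m c : ℕ) :
    ∑ j ∈ Icc (c+1) (m+1), ((m+1).choose j : ℝ≥0∞) * (3/4)^j * (1/4)^(m+1-j)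
      = (1/4) * (∑ j ∈ Icc (c+1) m, (m.choose j : ℝ≥0∞) * (3/4)^j * (1/4)^(m-j))
        + (3/4) * (∑ j ∈ Icc c m, (m.choose j : ℝ≥0∞) * (3/4)^j * (1/4)^(m-j)) := by
  by_cases hcm : c ≤ m
  · have reidx : ∀ g : ℕ → ℝ≥0∞, ∑ j ∈ Icc (c+1) (m+1), g j = ∑ i ∈ Icc c m, g (i+1) := by
      intro g
      rw [← Finset.map_add_right_Icc c m 1, Finset.sum_map]
      rfl
    rw [reidx]
    have step : ∀ i ∈ Icc c m,
        ((m+1).choose (i+1) : ℝ≥0∞) * (3/4)^(i+1) * (1/4)^(m+1-(i+1))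
        = (3/4) * ((m.choose i : ℝ≥0∞) * (3/4)^i * (1/4)^(m-i))
          + ((m.choose (i+1) : ℝ≥0∞) * (3/4)^(i+1) * (1/4)^(m+1-(i+1))) := by
      intro i hi
      have : m+1-(i+1) = m - i := by omega
      rw [this, Nat.choose_succ_succ]
      push_cast
      ring
    rw [Finset.sum_congr rfl step, Finset.sum_add_distrib]
    have e1 : ∑ i ∈ Icc c m, (3/4) * ((m.choose i : ℝ≥0∞) * (3/4)^i * (1/4)^(m-i))
        = (3/4) * ∑ i ∈ Icc c m, ((m.choose i : ℝ≥0∞) * (3/4)^i * (1/4)^(m-i)) := by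
      rw [Finset.mul_sum]
    have e2 : ∑ i ∈ Icc c m, ((m.choose (i+1) : ℝ≥0∞) * (3/4)^(i+1) * (1/4)^(m+1-(i+1)))
        = (1/4) * ∑ j ∈ Icc (c+1) m, ((m.choose j : ℝ≥0∞) * (3/4)^j * (1/4)^(m-j)) := by
      rw [← reidx (fun j => (m.choose j : ℝ≥0∞) * (3/4)^j * (1/4)^(m+1-j)),
        Finset.sum_Icc_succ_top (by omega)]
      simp only [Nat.choose_succ_self, Nat.cast_zero, zero_mul, add_zero]
      rw [Finset.mul_sum]
      refine Finset.sum_congr rfl fun j hj => ?_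
      have hj' : j ≤ m := (Finset.mem_Icc.mp hj).2
      have : m + 1 - j = (m - j) + 1 := by omega
      rw [this, pow_succ]
      ring
    rw [e1, e2, add_comm]
  · have h1 : Icc (c+1) (m+1) = ∅ := Finset.Icc_eq_empty (by omega)
    have h2 : Icc (c+1) m = ∅ := Finset.Icc_eq_empty (by omega)
    have h3 : Icc c m = ∅ := Finset.Icc_eq_empty (by omega)
    simp [h1, h2, h3]

lemma stmt11_count_meas {Ω : Type*} [MeasurableSpace Ω] (C : ℕ → Ω → ℝ)
    (h : ∀ i, Measurable (C i)) (m : ℕ) :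
    Measurable fun ω => (((Finset.range m).filter (fun i => C i ω = 1)).card) := by
  simp only [Finset.card_filter]
  exact Finset.measurable_sum _ fun i _ =>
    Measurable.ite (h i (measurableSet_singleton 1)) measurable_const measurable_const

end Stmt11Helpers

/-- if `C_1, …, C_n` (here indexed `C 0, …, C (n-1)`) are
`{−1,+1}`-valued random variables with `P(C_1 = +1) ≤ 3/4` and, for every `i ≥ 2`,
`P(C_i = +1 | (C_1,…,C_{i−1}) = v) ≤ 3/4` whenever the conditioning event has
positive probability, then for every `k ≤ n`,
`P(at least k of the C_i equal +1) ≤ P(B_{n,3/4} ≥ k)`, the binomial upper tail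
`∑_{j=k}^{n} (n choose j) (3/4)^j (1/4)^{n−j}`. -/
theorem stmt11 {Ω : Type*} [MeasurableSpace Ω] (P : Measure Ω) [IsProbabilityMeasure P]
    (n : ℕ) (hn : 0 < n)
    (C : ℕ → Ω → ℝ) (hCmeas : ∀ i, Measurable (C i))
    (hCv : ∀ i ω, C i ω = 1 ∨ C i ω = -1)
    (hfirst : P {ω | C 0 ω = 1} ≤ 3/4)
    (hcond : ∀ i, 1 ≤ i → i < n → ∀ v : Fin i → ℝ,
      0 < P {ω | ∀ j : Fin i, C j ω = v j} →
      P[|{ω | ∀ j : Fin i, C j ω = v j}] {ω | C i ω = 1} ≤ 3/4)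
    (k : ℕ) (hk : k ≤ n) :
    P {ω | k ≤ ((Finset.range n).filter (fun i => C i ω = 1)).card} ≤
      ∑ j ∈ Finset.Icc k n, (n.choose j : ℝ≥0∞) * (3/4)^j * (1/4)^(n - j) := by

  classical
  set cnt : ℕ → Ω → ℕ := fun m ω => ((Finset.range m).filter (fun i => C i ω = 1)).card with hcnt
  have hAmeas : ∀ m k, MeasurableSet {ω | k ≤ cnt m ω} :=
    fun m k => stmt11_count_meas C hCmeas m measurableSet_Ici
  -- key lemma: conditional bound
  have key : ∀ m, m < n → ∀ c, P ({ω | cnt m ω = c} ∩ {ω | C m ω = 1})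
      ≤ 3/4 * P {ω | cnt m ω = c} := by
    intro m hmn c
    rcases Nat.eq_zero_or_pos m with rfl | hm1
    · -- m = 0 : cnt 0 ω = 0
      have h0 : ∀ ω, cnt 0 ω = 0 := fun ω => by simp [hcnt]
      rcases Nat.eq_zero_or_pos c with rfl | hc
      · have hD : {ω | cnt 0 ω = 0} = Set.univ := by ext ω; simp [h0]
        rw [hD, Set.univ_inter, measure_univ, mul_one]
        exact hfirst
      · have hD : {ω | cnt 0 ω = c} = (∅ : Set Ω) := by
          ext ω; simp [h0]; omega
        rw [hD, Set.empty_inter, measure_empty]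
        exact zero_le
    · -- m ≥ 1 : partition by values of (C 0, …, C (m-1))
      set V : (Fin m → Bool) → Set Ω :=
        fun b => {ω | ∀ j : Fin m, C j ω = (if b j then (1:ℝ) else -1)} with hV
      have hVmeas : ∀ b, MeasurableSet (V b) := by
        intro b
        have : V b = ⋂ j : Fin m, (C j) ⁻¹' {if b j then (1:ℝ) else -1} := by
          ext ω; simp [hV, Set.mem_iInter]
        rw [this]
        exact MeasurableSet.iInter fun j => hCmeas j (measurableSet_singleton _)
      have hVdisj : ∀ b b' : Fin m → Bool, b ≠ b' → Disjoint (V b) (V b') := by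
        intro b b' hne
        rw [Set.disjoint_left]
        intro ω hb hb'
        apply hne
        funext j
        have h1 := hb j
        have h2 := hb' j
        by_cases e1 : b j <;> by_cases e2 : b' j <;>
          simp [e1, e2] at h1 h2 ⊢ <;> rw [h1] at h2 <;> norm_num at h2
      have hcntV : ∀ (b : Fin m → Bool) (ω : Ω), ω ∈ V b →
          cnt m ω = (Finset.univ.filter (fun j : Fin m => b j)).card := by
        intro b ω hω
        simp only [hcnt, Finset.card_filter]
        rw [← Fin.sum_univ_eq_sum_range (fun i => if C i ω = 1 then 1 else 0)]
        refine Finset.sum_congr rfl fun j _ => ?_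
        have := hω j
        by_cases e : b j
        · simp [e] at this; simp [this, e]
        · simp [e] at this; rw [this]; simp [e]; norm_num
      set S : Finset (Fin m → Bool) :=
        Finset.univ.filter (fun b => (Finset.univ.filter (fun j : Fin m => b j)).card = c) with hS
      have hDeq : {ω | cnt m ω = c} = ⋃ b ∈ S, V b := by
        ext ω
        simp only [Set.mem_setOf_eq, Set.mem_iUnion]
        constructor
        · intro hω
          refine ⟨fun j => if C j ω = 1 then true else false, ?_, ?_⟩
          · rw [hS, Finset.mem_filter]
            refine ⟨Finset.mem_univ _, ?_⟩
            rw [← hω]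
            simp only [hcnt, Finset.card_filter]
            rw [← Fin.sum_univ_eq_sum_range (fun i => if C i ω = 1 then 1 else 0)]
            refine (Finset.sum_congr rfl fun j _ => ?_).symm
            by_cases e : C (j : ℕ) ω = 1 <;> simp [e]
          · intro j
            rcases hCv j ω with h | h <;> simp [h] <;> norm_num
        · rintro ⟨b, hbS, hωb⟩
          rw [hcntV b ω hωb]
          rw [hS, Finset.mem_filter] at hbS
          exact hbS.2
      have hsum1 : P ({ω | cnt m ω = c} ∩ {ω | C m ω = 1})
          = ∑ b ∈ S, P (V b ∩ {ω | C m ω = 1}) := by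
        rw [hDeq, Set.iUnion₂_inter]
        exact measure_biUnion_finset
          (fun b _ b' _ hne => (hVdisj b b' hne).mono Set.inter_subset_left Set.inter_subset_left)
          (fun b _ => (hVmeas b).inter (hCmeas m (measurableSet_singleton 1)))
      have hsum2 : P {ω | cnt m ω = c} = ∑ b ∈ S, P (V b) := by
        rw [hDeq]
        exact measure_biUnion_finset (fun b _ b' _ hne => hVdisj b b' hne) (fun b _ => hVmeas b)
      rw [hsum1, hsum2, Finset.mul_sum]
      refine Finset.sum_le_sum fun b _ => ?_
      rcases eq_or_ne (P (V b)) 0 with h0 | h0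
      · have : P (V b ∩ {ω | C m ω = 1}) = 0 :=
          le_antisymm (h0 ▸ measure_mono Set.inter_subset_left) zero_le
        rw [this]; exact zero_le
      · have hc := hcond m hm1 hmn (fun j => if b j then (1:ℝ) else -1)
          (pos_iff_ne_zero.mpr h0)
        rw [cond_apply (hVmeas b) P] at hc
        calc P (V b ∩ {ω | C m ω = 1})
            = P (V b) * ((P (V b))⁻¹ * P (V b ∩ {ω | C m ω = 1})) := by
              rw [← mul_assoc, ENNReal.mul_inv_cancel h0 (measure_ne_top P _), one_mul]
          _ ≤ P (V b) * (3/4) := mul_le_mul_right hc _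
          _ = 3/4 * P (V b) := mul_comm _ _
  -- main induction
  have main : ∀ m, m ≤ n → ∀ k, P {ω | k ≤ cnt m ω}
      ≤ ∑ j ∈ Finset.Icc k m, (m.choose j : ℝ≥0∞) * (3/4)^j * (1/4)^(m - j) := by
    intro m
    induction m with
    | zero =>
      intro _ k
      rcases Nat.eq_zero_or_pos k with rfl | hkpos
      · have : {ω | 0 ≤ cnt 0 ω} = Set.univ := by ext ω; simp
        rw [this, measure_univ]
        simp
      · have : {ω | k ≤ cnt 0 ω} = (∅ : Set Ω) := by
          ext ω; simp [hcnt]; omega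
        rw [this, measure_empty]
        exact zero_le
    | succ m ih =>
      intro hmn k
      have hmn' : m < n := hmn
      have ih' := ih (le_of_lt hmn')
      rcases Nat.eq_zero_or_pos k with rfl | hkpos
      · rw [stmt11_tail_zero (m+1)]
        exact prob_le_one
      · obtain ⟨c, rfl⟩ : ∃ c, k = c + 1 := ⟨k - 1, by omega⟩
        have hsplit : ∀ ω, cnt (m+1) ω = cnt m ω + (if C m ω = 1 then 1 else 0) := by
          intro ω
          simp only [hcnt, Finset.range_add_one, Finset.filter_insert]
          by_cases h : C m ω = 1
          · simp [h, Finset.card_insert_of_notMem (show m ∉ Finset.filter (fun i => C i ω = 1) (Finset.range m) by simp)]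
          · simp [h]
        have hsub : {ω | c+1 ≤ cnt (m+1) ω}
            ⊆ {ω | c+1 ≤ cnt m ω} ∪ ({ω | cnt m ω = c} ∩ {ω | C m ω = 1}) := by
          intro ω hω
          simp only [Set.mem_setOf_eq] at hω
          rw [hsplit ω] at hω
          by_cases h : C m ω = 1
          · rw [if_pos h] at hω
            rcases Nat.lt_or_ge (cnt m ω) (c+1) with hlt | hge
            · exact Or.inr ⟨show cnt m ω = c by omega, h⟩
            · exact Or.inl hge
          · rw [if_neg h] at hω
            exact Or.inl (by simpa using hω)
        have hunion : {ω | c ≤ cnt m ω}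
            = {ω | c+1 ≤ cnt m ω} ∪ {ω | cnt m ω = c} := by
          ext ω; simp only [Set.mem_setOf_eq, Set.mem_union]; omega
        have hDmeas : MeasurableSet {ω | cnt m ω = c} :=
          stmt11_count_meas C hCmeas m (measurableSet_singleton c)
        have hPdisj : P {ω | c ≤ cnt m ω} = P {ω | c+1 ≤ cnt m ω} + P {ω | cnt m ω = c} := by
          rw [hunion, measure_union _ hDmeas]
          rw [Set.disjoint_left]
          intro ω h1 h2
          simp only [Set.mem_setOf_eq] at h1 h2
          omega
        calc P {ω | c+1 ≤ cnt (m+1) ω}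
            ≤ P ({ω | c+1 ≤ cnt m ω} ∪ ({ω | cnt m ω = c} ∩ {ω | C m ω = 1})) :=
              measure_mono hsub
          _ ≤ P {ω | c+1 ≤ cnt m ω} + P ({ω | cnt m ω = c} ∩ {ω | C m ω = 1}) :=
              measure_union_le _ _
          _ ≤ P {ω | c+1 ≤ cnt m ω} + 3/4 * P {ω | cnt m ω = c} :=
              add_le_add le_rfl (key m hmn' c)
          _ = 1/4 * P {ω | c+1 ≤ cnt m ω} + 3/4 * P {ω | c ≤ cnt m ω} := by
              rw [hPdisj, mul_add, ← add_assoc]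
              congr 1
              rw [← add_mul, stmt11_quarter', one_mul]
          _ ≤ 1/4 * (∑ j ∈ Finset.Icc (c+1) m, (m.choose j : ℝ≥0∞) * (3/4)^j * (1/4)^(m - j))
              + 3/4 * (∑ j ∈ Finset.Icc c m, (m.choose j : ℝ≥0∞) * (3/4)^j * (1/4)^(m - j)) :=
              add_le_add (mul_le_mul_right (ih' (c+1)) _) (mul_le_mul_right (ih' c) _)
          _ = _ := (stmt11_tail_rec m c).symm
  exact main n le_rfl k
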